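/- Let (D_t) be i.i.d. random variables with values in {-2,-1,0,1,2}, satisfying |D_t| ≤ 2 and E(D_t) ≤ -1/2, and let (W_t) be the reflected random walk defined by W_0 = 3 and W_{t+1} = max{3, W_t + D_t}. Then there exists 0 < ρ < 1 such that for every t and every k ≥ 0, P(W_t ≥ 3 + k) ≤ ρ^k. -/

import Mathlib

open MeasureTheory ProbabilityTheory

/-- Abstract recursion for the reflected walk as a function of the increments. -/
private def walkF : ℕ → (ℕ → ℤ) → ℤ
  | 0, _ => 3
  | (t+1), v => max 3 (walkF t v + v t)

private lemma walkF_meas (t : ℕ) : Measurable (walkF t) := by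
  induction t with
  | zero => exact measurable_const
  | succ t ih =>
    have : walkF (t+1) = fun v => max 3 (walkF t v + v t) := rfl
    rw [this]
    exact measurable_from_top.comp (ih.add (measurable_pi_apply t))

private lemma walkF_agree (t : ℕ) (v v' : ℕ → ℤ) (h : ∀ i, i < t → v i = v' i) :
    walkF t v = walkF t v' := by
  induction t with
  | zero => rfl
  | succ t ih =>
    have h1 : walkF t v = walkF t v' := ih (fun i hi => h i (Nat.lt_succ_of_lt hi))
    show max 3 (walkF t v + v t) = max 3 (walkF t v' + v' t)
    rw [h1, h t (Nat.lt_succ_self t)]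

/-- Pointwise bound: for `|d| ≤ 2`, `(9/10)^(-d) ≤ 1 + (11/100) d + 1/25`. -/
private lemma rho_pointwise (d : ℤ) (hd : |d| ≤ 2) :
    ((9:ℝ)/10) ^ (-d) ≤ 1 + (11/100) * (d:ℝ) + 1/25 := by
  have h1 : -2 ≤ d := neg_le_of_abs_le hd
  have h2 : d ≤ 2 := le_of_abs_le hd
  interval_cases d <;> norm_num

theorem stmt_7 {Ω : Type*} [MeasurableSpace Ω] (μ : Measure Ω) [IsProbabilityMeasure μ]
    (D : ℕ → Ω → ℤ)
    (hmeas : ∀ t, Measurable (D t))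
    (hindep : iIndepFun D μ)
    (hident : ∀ t, IdentDistrib (D t) (D 0) μ μ)
    (hbd : ∀ t ω, |D t ω| ≤ 2)
    (hmean : ∀ t, ∫ ω, ((D t ω : ℝ)) ∂μ ≤ -1/2)
    (W : ℕ → Ω → ℤ)
    (hW0 : ∀ ω, W 0 ω = 3)
    (hWrec : ∀ t ω, W (t + 1) ω = max 3 (W t ω + D t ω)) :
    ∃ ρ : ℝ, 0 < ρ ∧ ρ < 1 ∧
      ∀ (t : ℕ) (k : ℕ), (μ {ω | 3 + (k : ℤ) ≤ W t ω}).toReal ≤ ρ ^ k := by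
  classical
  set ρ : ℝ := 9/10 with hρdef
  have hρ0 : (0:ℝ) < ρ := by norm_num [hρdef]
  have hρ1 : ρ < 1 := by norm_num [hρdef]
  refine ⟨ρ, hρ0, hρ1, ?_⟩
  -- W t ω is a function of the first t increments
  have hW_eq : ∀ t ω, W t ω = walkF t (fun n => D n ω) := by
    intro t
    induction t with
    | zero => intro ω; simpa [walkF] using hW0 ω
    | succ t ih =>
      intro ω
      rw [hWrec t ω, ih ω]
      rfl
  -- measurability of W t
  have hWmeas : ∀ t, Measurable (W t) := by
    intro t
    have : W t = fun ω => walkF t (fun n => D n ω) := funext (hW_eq t)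
    rw [this]
    exact (walkF_meas t).comp (measurable_pi_lambda _ (fun n => hmeas n))
  -- independence of W t and D t
  have hindepWD : ∀ t, IndepFun (W t) (D t) μ := by
    intro t
    have h1 := hindep.indepFun_finset (Finset.range t) {t}
      (by simp only [Finset.disjoint_left, Finset.mem_range, Finset.mem_singleton]; omega) hmeas
    set φ : ((i : (Finset.range t : Finset ℕ)) → ℤ) → ℤ :=
      fun v => walkF t (fun n => if h : n ∈ Finset.range t then v ⟨n, h⟩ else 0) with hφdef
    have hφ : Measurable φ := by
      apply (walkF_meas t).comp
      apply measurable_pi_lambda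
      intro n
      by_cases h : n ∈ Finset.range t
      · simp only [h, dif_pos]
        exact measurable_pi_apply _
      · simp only [h, dif_neg, not_false_iff]
        exact measurable_const
    set ψ : ((i : ({t} : Finset ℕ)) → ℤ) → ℤ := fun v => v ⟨t, by simp⟩ with hψdef
    have hψ : Measurable ψ := measurable_pi_apply _
    have h2 := h1.comp hφ hψ
    have e1 : φ ∘ (fun ω (i : (Finset.range t : Finset ℕ)) => D i ω) = W t := by
      funext ω
      simp only [Function.comp_apply, hφdef]
      rw [hW_eq t ω]
      apply walkF_agree
      intro i hi
      simp [Finset.mem_range.mpr hi]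
    have e2 : ψ ∘ (fun ω (i : ({t} : Finset ℕ)) => D i ω) = D t := rfl
    rwa [e1, e2] at h2
  -- product formula
  have hmul : ∀ t (d m : ℤ),
      μ ({ω | D t ω = d} ∩ {ω | 3 + m ≤ W t ω})
        = μ {ω | D t ω = d} * μ {ω | 3 + m ≤ W t ω} := by
    intro t d m
    have h := (hindepWD t).symm.measure_inter_preimage_eq_mul {d} (Set.Ici (3+m))
      (measurableSet_singleton d) measurableSet_Ici
    have e1 : D t ⁻¹' {d} = {ω | D t ω = d} := by ext ω; simp
    have e2 : W t ⁻¹' Set.Ici (3+m) = {ω | 3 + m ≤ W t ω} := by ext ω; simp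
    rwa [e1, e2] at h
  -- partition facts
  have hDmem : ∀ t ω, D t ω ∈ Finset.Icc (-2:ℤ) 2 := by
    intro t ω
    have := hbd t ω
    rw [abs_le] at this
    simpa [Finset.mem_Icc] using this
  have hpart : ∀ t, ∑ d ∈ Finset.Icc (-2:ℤ) 2, (μ {ω | D t ω = d}).toReal = 1 := by
    intro t
    have hdisj : (↑(Finset.Icc (-2:ℤ) 2) : Set ℤ).PairwiseDisjoint
        (fun d => {ω | D t ω = d}) := by
      intro a _ b _ hab
      simp only [Function.onFun, Set.disjoint_left]
      intro ω ha hb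
      exact hab (ha ▸ hb ▸ rfl)
    have hmeas' : ∀ d ∈ Finset.Icc (-2:ℤ) 2, MeasurableSet {ω | D t ω = d} :=
      fun d _ => (hmeas t) (measurableSet_singleton d)
    have huniv : (⋃ d ∈ Finset.Icc (-2:ℤ) 2, {ω | D t ω = d}) = Set.univ := by
      ext ω
      simp only [Set.mem_iUnion, Set.mem_setOf_eq, Set.mem_univ, iff_true]
      exact ⟨D t ω, hDmem t ω, rfl⟩
    have := measure_biUnion_finset (μ := μ) hdisj hmeas'
    rw [huniv, measure_univ] at this
    rw [← ENNReal.toReal_sum (fun d _ => measure_ne_top μ _), ← this]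
    simp
  have hint : ∀ t, ∫ ω, ((D t ω : ℝ)) ∂μ
      = ∑ d ∈ Finset.Icc (-2:ℤ) 2, (d:ℝ) * (μ {ω | D t ω = d}).toReal := by
    intro t
    have hfun : (fun ω => ((D t ω : ℝ)))
        = fun ω => ∑ d ∈ Finset.Icc (-2:ℤ) 2,
            Set.indicator {ω | D t ω = d} (fun _ => (d:ℝ)) ω := by
      funext ω
      rw [Finset.sum_eq_single (D t ω)]
      · simp [Set.indicator_apply]
      · intro b _ hb
        have : ω ∉ {ω | D t ω = b} := fun h => hb (Eq.symm h)
        simp [Set.indicator_of_notMem this]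
      · intro h
        exact absurd (hDmem t ω) h
    rw [hfun, integral_finset_sum]
    · apply Finset.sum_congr rfl
      intro d _
      rw [integral_indicator_const (μ := μ) (d:ℝ)
        (show MeasurableSet {ω | D t ω = d} from (hmeas t) (measurableSet_singleton d))]
      rw [smul_eq_mul, mul_comm]
      rfl
    · intro d _
      apply Integrable.indicator _ ((hmeas t) (measurableSet_singleton d))
      exact integrable_const _
  -- the combined weighted-sum bound
  have hkey : ∀ t, ∑ d ∈ Finset.Icc (-2:ℤ) 2,
      (μ {ω | D t ω = d}).toReal * ρ ^ (-d) ≤ 1 := by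
    intro t
    have step1 : ∑ d ∈ Finset.Icc (-2:ℤ) 2, (μ {ω | D t ω = d}).toReal * ρ ^ (-d)
        ≤ ∑ d ∈ Finset.Icc (-2:ℤ) 2,
            (μ {ω | D t ω = d}).toReal * (1 + (11/100) * (d:ℝ) + 1/25) := by
      apply Finset.sum_le_sum
      intro d hd
      apply mul_le_mul_of_nonneg_left _ ENNReal.toReal_nonneg
      have : |d| ≤ 2 := by
        rw [Finset.mem_Icc] at hd
        rw [abs_le]; omega
      exact rho_pointwise d this
    have step2 : ∑ d ∈ Finset.Icc (-2:ℤ) 2,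
        (μ {ω | D t ω = d}).toReal * (1 + (11/100) * (d:ℝ) + 1/25)
        = (1 + 1/25) + (11/100) * ∫ ω, ((D t ω : ℝ)) ∂μ := by
      calc ∑ d ∈ Finset.Icc (-2:ℤ) 2,
          (μ {ω | D t ω = d}).toReal * (1 + (11/100) * (d:ℝ) + 1/25)
          = ∑ d ∈ Finset.Icc (-2:ℤ) 2,
              ((1 + 1/25) * (μ {ω | D t ω = d}).toReal
                + (11/100) * ((d:ℝ) * (μ {ω | D t ω = d}).toReal)) := by
            apply Finset.sum_congr rfl; intro d _; ring
        _ = (1 + 1/25) * (∑ d ∈ Finset.Icc (-2:ℤ) 2, (μ {ω | D t ω = d}).toReal)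
            + (11/100) * (∑ d ∈ Finset.Icc (-2:ℤ) 2, (d:ℝ) * (μ {ω | D t ω = d}).toReal) := by
            rw [Finset.sum_add_distrib, Finset.mul_sum, Finset.mul_sum]
        _ = (1 + 1/25) + (11/100) * ∫ ω, ((D t ω : ℝ)) ∂μ := by
            rw [hpart t, ← hint t]; ring
    have step3 : (1 + 1/25 : ℝ) + (11/100) * ∫ ω, ((D t ω : ℝ)) ∂μ
        ≤ (1 + 1/25) + (11/100) * (-1/2) := by
      have := hmean t
      nlinarith
    calc ∑ d ∈ Finset.Icc (-2:ℤ) 2, (μ {ω | D t ω = d}).toReal * ρ ^ (-d)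
        ≤ (1 + 1/25) + (11/100) * ∫ ω, ((D t ω : ℝ)) ∂μ := step1.trans_eq step2
      _ ≤ (1 + 1/25) + (11/100) * (-1/2) := step3
      _ ≤ 1 := by norm_num
  have htoReal_le_one : ∀ (s : Set Ω), (μ s).toReal ≤ 1 := by
    intro s
    simpa using ENNReal.toReal_mono ENNReal.one_ne_top (prob_le_one (μ := μ) (s := s))
  -- main induction
  have hmain : ∀ t (k : ℕ), (μ {ω | 3 + (k : ℤ) ≤ W t ω}).toReal ≤ ρ ^ k := by
    intro t
    induction t with
    | zero =>
      intro k
      cases k with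
      | zero =>
        simpa using htoReal_le_one {ω | 3 + ((0:ℕ):ℤ) ≤ W 0 ω}
      | succ k =>
        have : {ω | 3 + ((k+1 : ℕ) : ℤ) ≤ W 0 ω} = ∅ := by
          ext ω
          simp only [Set.mem_setOf_eq, Set.mem_empty_iff_false, iff_false, not_le, hW0 ω]
          push_cast
          omega
        rw [this]
        simp [le_of_lt (pow_pos hρ0 (k+1))]
    | succ t ih =>
      -- extended induction hypothesis
      have ihz : ∀ m : ℤ, (μ {ω | 3 + m ≤ W t ω}).toReal ≤ ρ ^ m := by
        intro m
        by_cases hm : 0 ≤ m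
        · obtain ⟨n, rfl⟩ := Int.eq_ofNat_of_zero_le hm
          rw [zpow_natCast]
          exact ih n
        · push_neg at hm
          have h1 : (μ {ω | 3 + m ≤ W t ω}).toReal ≤ 1 :=
            htoReal_le_one _
          have h2 : (1:ℝ) ≤ ρ ^ m :=
            one_le_zpow_of_nonpos₀ hρ0 hρ1.le (le_of_lt hm)
          linarith
      intro k
      cases k with
      | zero =>
        simpa using htoReal_le_one {ω | 3 + ((0:ℕ):ℤ) ≤ W (t+1) ω}
      | succ k =>
        set K : ℤ := ((k+1 : ℕ) : ℤ) with hKdef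
        have hK1 : 1 ≤ K := by simp [hKdef]
        -- decompose the event
        have hset : {ω | 3 + K ≤ W (t+1) ω}
            = ⋃ d ∈ Finset.Icc (-2:ℤ) 2,
                ({ω | D t ω = d} ∩ {ω | 3 + (K - d) ≤ W t ω}) := by
          ext ω
          simp only [Set.mem_setOf_eq, Set.mem_iUnion, Set.mem_inter_iff, hWrec t ω,
            le_max_iff, exists_prop]
          constructor
          · rintro (h | h)
            · omega
            · exact ⟨D t ω, hDmem t ω, rfl, by omega⟩
          · rintro ⟨d, _, rfl, h⟩
            right; omega
        have hdisj : (↑(Finset.Icc (-2:ℤ) 2) : Set ℤ).PairwiseDisjoint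
            (fun d => {ω | D t ω = d} ∩ {ω | 3 + (K - d) ≤ W t ω}) := by
          intro a _ b _ hab
          simp only [Function.onFun, Set.disjoint_left]
          rintro ω ⟨ha, -⟩ ⟨hb, -⟩
          exact hab (ha ▸ hb ▸ rfl)
        have hmeas' : ∀ d ∈ Finset.Icc (-2:ℤ) 2,
            MeasurableSet ({ω | D t ω = d} ∩ {ω | 3 + (K - d) ≤ W t ω}) :=
          fun d _ => ((hmeas t) (measurableSet_singleton d)).inter
            ((hWmeas t) measurableSet_Ici)
        have hμ : μ {ω | 3 + K ≤ W (t+1) ω}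
            = ∑ d ∈ Finset.Icc (-2:ℤ) 2,
                μ ({ω | D t ω = d} ∩ {ω | 3 + (K - d) ≤ W t ω}) := by
          rw [hset]
          exact measure_biUnion_finset hdisj hmeas'
        have hcalc : (μ {ω | 3 + K ≤ W (t+1) ω}).toReal
            = ∑ d ∈ Finset.Icc (-2:ℤ) 2,
                (μ {ω | D t ω = d}).toReal * (μ {ω | 3 + (K - d) ≤ W t ω}).toReal := by
          rw [hμ, ENNReal.toReal_sum (fun d _ => measure_ne_top μ _)]
          apply Finset.sum_congr rfl
          intro d _
          rw [hmul t d (K - d), ENNReal.toReal_mul]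
        rw [hcalc]
        have hbound : ∑ d ∈ Finset.Icc (-2:ℤ) 2,
            (μ {ω | D t ω = d}).toReal * (μ {ω | 3 + (K - d) ≤ W t ω}).toReal
            ≤ ∑ d ∈ Finset.Icc (-2:ℤ) 2,
                (μ {ω | D t ω = d}).toReal * (ρ ^ K * ρ ^ (-d)) := by
          apply Finset.sum_le_sum
          intro d _
          apply mul_le_mul_of_nonneg_left _ ENNReal.toReal_nonneg
          calc (μ {ω | 3 + (K - d) ≤ W t ω}).toReal ≤ ρ ^ (K - d) := ihz (K - d)
            _ = ρ ^ K * ρ ^ (-d) := by rw [← zpow_add₀ (ne_of_gt hρ0)]; ring_nf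
        refine hbound.trans ?_
        have : ∑ d ∈ Finset.Icc (-2:ℤ) 2,
            (μ {ω | D t ω = d}).toReal * (ρ ^ K * ρ ^ (-d))
            = ρ ^ K * ∑ d ∈ Finset.Icc (-2:ℤ) 2,
                (μ {ω | D t ω = d}).toReal * ρ ^ (-d) := by
          rw [Finset.mul_sum]
          apply Finset.sum_congr rfl
          intro d _
          ring
        rw [this]
        have hρK : ρ ^ K = ρ ^ (k+1) := by rw [hKdef, zpow_natCast]
        calc ρ ^ K * ∑ d ∈ Finset.Icc (-2:ℤ) 2,
              (μ {ω | D t ω = d}).toReal * ρ ^ (-d)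
            ≤ ρ ^ K * 1 := by
              apply mul_le_mul_of_nonneg_left (hkey t) (le_of_lt (zpow_pos hρ0 K))
          _ = ρ ^ (k+1) := by rw [mul_one, hρK]
  exact hmain
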